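/- If N_A is A-selfadjoint invariant and submultiplicative, then for T, S in B_A(H): ω_{N_A}(TS ± ST^{♯_A}) ≤ 2 N_A(T) ω_{N_A}(S). -/

import Mathlib

noncomputable section

open ContinuousLinearMap

variable {H : Type*} [NormedAddCommGroup H] [InnerProductSpace ℂ H] [CompleteSpace H]

/-- `Ts` is the distinguished `A`-adjoint `T^{♯_A}` of `T`:
the unique solution of `A X = T* A` whose range lies in the closure of the range of `A`. -/
def IsSharp (A T Ts : H →L[ℂ] H) : Prop :=
  A ∘L Ts = adjoint T ∘L A ∧ ∀ x, Ts x ∈ closure (Set.range A)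

/-- Membership in `B_A(H)`: admitting an `A`-adjoint. -/
def MemBA (A T : H →L[ℂ] H) : Prop := ∃ Ts, IsSharp A T Ts

/-- The seminorm `‖x‖_A = √⟨Ax,x⟩`. -/
def aNorm (A : H →L[ℂ] H) (x : H) : ℝ := Real.sqrt ((inner ℂ (A x) x : ℂ).re)

/-- Membership in `B_{A^{1/2}}(H)`: `A`-bounded operators. -/
def MemBAhalf (A T : H →L[ℂ] H) : Prop :=
  ∃ c : ℝ, 0 < c ∧ ∀ x, aNorm A (T x) ≤ c * aNorm A x

/-- `Re_A(T) = (T + T^{♯_A})/2`, where `Ts` stands for `T^{♯_A}`. -/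
def ReA (T Ts : H →L[ℂ] H) : H →L[ℂ] H := (2 : ℂ)⁻¹ • (T + Ts)

/-- `Im_A(T) = (T - T^{♯_A})/(2i)`, where `Ts` stands for `T^{♯_A}`. -/
def ImA (T Ts : H →L[ℂ] H) : H →L[ℂ] H := (2 * Complex.I)⁻¹ • (T - Ts)

/-- The generalized `A`-numerical radius
`ω_{N_A}(T) = sup_θ N_A(Re_A(e^{iθ}T))`, where `Ts` stands for `T^{♯_A}`. -/
def wNA (N : Seminorm ℂ (H →L[ℂ] H)) (T Ts : H →L[ℂ] H) : ℝ :=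
  ⨆ θ : ℝ, N (ReA (Complex.exp ((θ : ℂ) * Complex.I) • T)
      (Complex.exp (-((θ : ℂ) * Complex.I)) • Ts))

/-- `N_A` is `A`-selfadjoint invariant. -/
def SelfadjInv (A : H →L[ℂ] H) (N : Seminorm ℂ (H →L[ℂ] H)) : Prop :=
  ∀ T Ts, IsSharp A T Ts → N T = N Ts

/-- `N_A` is submultiplicative. -/
def Submult (A : H →L[ℂ] H) (N : Seminorm ℂ (H →L[ℂ] H)) : Prop :=
  ∀ T S, MemBAhalf A T → MemBAhalf A S → N (T ∘L S) ≤ N T * N S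

/-- `N_A` is `A`-increasing. -/
def AIncreasing (A : H →L[ℂ] H) (N : Seminorm ℂ (H →L[ℂ] H)) : Prop :=
  ∀ S T : H →L[ℂ] H, IsSelfAdjoint (A ∘L S) → IsSelfAdjoint (A ∘L T) →
    (A ∘L (T - S)).IsPositive → N S ≤ N T

/-- `N_A` satisfies the `A`-power property. -/
def APower (A : H →L[ℂ] H) (N : Seminorm ℂ (H →L[ℂ] H)) : Prop :=
  ∀ T : H →L[ℂ] H, IsSelfAdjoint (A ∘L T) → ∀ n : ℕ, 0 < n → N (T ^ n) = N T ^ n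

/-- `U` is `A`-unitary with `A`-adjoint `Us`. -/
def AUnitary (A U Us : H →L[ℂ] H) : Prop :=
  IsSharp A U Us ∧ ∀ x, aNorm A (U x) = aNorm A x ∧ aNorm A (Us x) = aNorm A x

/-- `N_A` is `A`-weakly unitarily invariant. -/
def WeakUnitInv (A : H →L[ℂ] H) (N : Seminorm ℂ (H →L[ℂ] H)) : Prop :=
  ∀ T U Us, MemBAhalf A T → AUnitary A U Us → N (Us ∘L T ∘L U) = N T

/-- semi-inner product `⟨x,y⟩_A = ⟨Ax, y⟩`. -/
def aInner (A : H →L[ℂ] H) (x y : H) : ℂ := inner ℂ (A x) y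

/-- `A`-operator seminorm `‖T‖_A = sup{|⟨Tx,y⟩_A| : ‖x‖_A = ‖y‖_A = 1}`. -/
def opANorm (A T : H →L[ℂ] H) : ℝ :=
  sSup {r : ℝ | ∃ x y, aNorm A x = 1 ∧ aNorm A y = 1 ∧ r = ‖aInner A (T x) y‖}

/-- `A`-numerical radius `ω_A(T) = sup{|⟨Tx,x⟩_A| : ‖x‖_A = 1}`. -/
def wA (A T : H →L[ℂ] H) : ℝ :=
  sSup {r : ℝ | ∃ x, aNorm A x = 1 ∧ r = ‖aInner A (T x) x‖}

/-- `Ω_A(T) = sup{‖αT + βT^{♯_A}‖_A : |α|² + |β|² ≤ 1}`, with `Ts` standing for `T^{♯_A}`. -/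
def OmegaA (A T Ts : H →L[ℂ] H) : ℝ :=
  sSup {r : ℝ | ∃ α β : ℂ, ‖α‖ ^ 2 + ‖β‖ ^ 2 ≤ 1 ∧ r = opANorm A (α • T + β • Ts)}

set_option linter.unusedSectionVars false

lemma exists_sqrt {A : H →L[ℂ] H} (hA : A.IsPositive) :
    ∃ B : H →L[ℂ] H, IsSelfAdjoint B ∧ ∀ x, B (B x) = A x := by
  have h0 : (0 : H →L[ℂ] H) ≤ A := (nonneg_iff_isPositive A).2 hA
  refine ⟨CFC.sqrt A, IsSelfAdjoint.of_nonneg (CFC.sqrt_nonneg A), fun x => ?_⟩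
  have : CFC.sqrt A * CFC.sqrt A = A := CFC.sqrt_mul_sqrt_self A h0
  calc CFC.sqrt A (CFC.sqrt A x) = (CFC.sqrt A * CFC.sqrt A) x := rfl
    _ = A x := by rw [this]

lemma innerA_eq {A B : H →L[ℂ] H} (hB : IsSelfAdjoint B) (hB2 : ∀ x, B (B x) = A x)
    (x y : H) : (inner ℂ (A x) y : ℂ) = inner ℂ (B x) (B y) := by
  rw [← hB2, ← adjoint_inner_left, hB.adjoint_eq]

lemma sq_norm_eq {A B : H →L[ℂ] H} (hB : IsSelfAdjoint B) (hB2 : ∀ x, B (B x) = A x)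
    (u : H) : ‖B u‖ ^ 2 = (inner ℂ (A u) u : ℂ).re := by
  rw [innerA_eq hB hB2,
    show (inner ℂ (B u) (B u) : ℂ).re = RCLike.re (inner ℂ (B u) (B u) : ℂ) from rfl,
    inner_self_eq_norm_sq]

lemma aNorm_eq_sqrtApply {A B : H →L[ℂ] H} (hB : IsSelfAdjoint B) (hB2 : ∀ x, B (B x) = A x)
    (x : H) : aNorm A x = ‖B x‖ := by
  rw [aNorm, innerA_eq hB hB2,
    show (inner ℂ (B x) (B x) : ℂ).re = RCLike.re (inner ℂ (B x) (B x) : ℂ) from rfl,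
    inner_self_eq_norm_sq, Real.sqrt_sq (norm_nonneg _)]

lemma key_bound {A B R : H →L[ℂ] H} (hB : IsSelfAdjoint B) (hB2 : ∀ x, B (B x) = A x)
    (hAR : IsSelfAdjoint (A ∘L R)) (x : H) :
    ‖B (R x)‖ ≤ (‖R‖ + 1) * ‖B x‖ := by
  have hM1 : (1:ℝ) ≤ ‖R‖ + 1 := by linarith [norm_nonneg R]
  have hM0 : (0:ℝ) < ‖R‖ + 1 := by positivity
  have hAeq : A = B ∘L B := by ext u; exact (hB2 u).symm
  have hA : IsSelfAdjoint A := by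
    rw [isSelfAdjoint_iff', hAeq, adjoint_comp, hB.adjoint_eq]
  -- selfadjointness of A ∘L R^m
  have sa : ∀ m : ℕ, IsSelfAdjoint (A ∘L R ^ m) := by
    intro m
    induction m with
    | zero => simpa [pow_zero, one_def, comp_id] using hA
    | succ m ih =>
      rw [isSelfAdjoint_iff']
      have e : A ∘L R ^ (m+1) = (A ∘L R ^ m) ∘L R := by
        show A * R ^ (m+1) = (A * R ^ m) * R
        rw [pow_succ, mul_assoc]
      rw [e, adjoint_comp, ih.adjoint_eq]
      have hRA : adjoint R ∘L A = A ∘L R := by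
        have := hAR.adjoint_eq
        rwa [adjoint_comp, hA.adjoint_eq] at this
      calc adjoint R ∘L (A ∘L R ^ m) = (adjoint R ∘L A) ∘L R ^ m := by rw [comp_assoc]
        _ = (A ∘L R) ∘L R ^ m := by rw [hRA]
        _ = A ∘L (R ∘L R ^ m) := by rw [comp_assoc]
        _ = (A ∘L R ^ m) ∘L R := by
            show A * (R * R ^ m) = (A * R ^ m) * R
            rw [mul_assoc, ← pow_succ, ← pow_succ']
  -- step inequality
  have step : ∀ m : ℕ, ‖B ((R ^ m) x)‖ ^ 2 ≤ ‖B ((R ^ (m + m)) x)‖ * ‖B x‖ := by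
    intro m
    have e1 : (inner ℂ (A ((R ^ m) x)) ((R ^ m) x) : ℂ)
        = inner ℂ (x : H) (A ((R ^ (m+m)) x)) := by
      have h1 : (inner ℂ (A ((R ^ m) x)) ((R ^ m) x) : ℂ)
          = inner ℂ ((adjoint (A ∘L R ^ m)) x) ((R ^ m) x) := by
        rw [(sa m).adjoint_eq]; rfl
      rw [h1, adjoint_inner_left]
      congr 1
      show A ((R ^ m) ((R ^ m) x)) = A ((R ^ (m+m)) x)
      rw [pow_add]; rfl
    have h2 : ‖B ((R ^ m) x)‖ ^ 2 = (inner ℂ (x : H) (A ((R ^ (m+m)) x)) : ℂ).re := by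
      rw [sq_norm_eq hB hB2, e1]
    rw [h2, ← inner_conj_symm, Complex.conj_re]
    calc (inner ℂ (A ((R ^ (m+m)) x)) x : ℂ).re
        ≤ ‖(inner ℂ (A ((R ^ (m+m)) x)) x : ℂ)‖ := Complex.re_le_norm _
      _ = ‖(inner ℂ (B ((R ^ (m+m)) x)) (B x) : ℂ)‖ := by rw [innerA_eq hB hB2]
      _ ≤ ‖B ((R ^ (m+m)) x)‖ * ‖B x‖ := norm_inner_le_norm _ _
  -- growth bound
  have rbound : ∀ n : ℕ, ‖(R ^ n) x‖ ≤ (‖R‖ + 1) ^ n * ‖x‖ := by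
    intro n
    induction n with
    | zero => simp
    | succ n ih =>
      have e : (R ^ (n+1)) x = R ((R ^ n) x) := by rw [pow_succ']; rfl
      calc ‖(R ^ (n+1)) x‖ = ‖R ((R ^ n) x)‖ := by rw [e]
        _ ≤ ‖R‖ * ‖(R ^ n) x‖ := le_opNorm _ _
        _ ≤ (‖R‖ + 1) * ((‖R‖ + 1) ^ n * ‖x‖) := by
            refine mul_le_mul (by linarith) ih (norm_nonneg _) (by positivity)
        _ = (‖R‖ + 1) ^ (n+1) * ‖x‖ := by rw [pow_succ]; ring
  have abound : ∀ n : ℕ, ‖B ((R ^ n) x)‖ ≤ ‖B‖ * ‖x‖ * (‖R‖ + 1) ^ n := by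
    intro n
    calc ‖B ((R ^ n) x)‖ ≤ ‖B‖ * ‖(R ^ n) x‖ := le_opNorm _ _
      _ ≤ ‖B‖ * ((‖R‖ + 1) ^ n * ‖x‖) :=
          mul_le_mul_of_nonneg_left (rbound n) (norm_nonneg _)
      _ = ‖B‖ * ‖x‖ * (‖R‖ + 1) ^ n := by ring
  by_cases hb : ‖B x‖ = 0
  · have h1 := step 1
    rw [hb, mul_zero] at h1
    have : ‖B ((R ^ 1) x)‖ = 0 := by
      have := pow_eq_zero_iff (n := 2) (by norm_num) |>.1 (le_antisymm h1 (by positivity))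
      exact this
    rw [pow_one] at this
    rw [this, hb, mul_zero]
  · have hb' : 0 < ‖B x‖ := lt_of_le_of_ne (norm_nonneg _) (Ne.symm hb)
    -- main induction
    have P : ∀ k : ℕ, ‖B (R x)‖ ^ (2 ^ k) * ‖B x‖ ≤ ‖B ((R ^ (2 ^ k)) x)‖ * ‖B x‖ ^ (2 ^ k) := by
      intro k
      induction k with
      | zero => simp [pow_one]
      | succ k ih =>
        have hsq : (‖B (R x)‖ ^ (2 ^ k) * ‖B x‖) ^ 2
            ≤ (‖B ((R ^ (2 ^ k)) x)‖ * ‖B x‖ ^ (2 ^ k)) ^ 2 :=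
          pow_le_pow_left₀ (by positivity) ih 2
        have e1 : (‖B (R x)‖ ^ (2 ^ k) * ‖B x‖) ^ 2
            = ‖B (R x)‖ ^ (2 ^ (k+1)) * ‖B x‖ ^ 2 := by
          rw [mul_pow, ← pow_mul, ← pow_succ]
        have e2 : (‖B ((R ^ (2 ^ k)) x)‖ * ‖B x‖ ^ (2 ^ k)) ^ 2
            = ‖B ((R ^ (2 ^ k)) x)‖ ^ 2 * ‖B x‖ ^ (2 ^ (k+1)) := by
          rw [mul_pow, ← pow_mul, ← pow_succ]
        have hstep : ‖B ((R ^ (2 ^ k)) x)‖ ^ 2 ≤ ‖B ((R ^ (2 ^ (k+1))) x)‖ * ‖B x‖ := by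
          have := step (2 ^ k)
          have e3 : 2 ^ k + 2 ^ k = 2 ^ (k+1) := by rw [pow_succ, mul_two]
          rwa [e3] at this
        have : ‖B (R x)‖ ^ (2 ^ (k+1)) * ‖B x‖ ^ 2
            ≤ (‖B ((R ^ (2 ^ (k+1))) x)‖ * ‖B x‖) * ‖B x‖ ^ (2 ^ (k+1)) := by
          calc ‖B (R x)‖ ^ (2 ^ (k+1)) * ‖B x‖ ^ 2 ≤ ‖B ((R ^ (2 ^ k)) x)‖ ^ 2 * ‖B x‖ ^ (2 ^ (k+1)) := by
                rw [← e1, ← e2]; exact hsq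
            _ ≤ (‖B ((R ^ (2 ^ (k+1))) x)‖ * ‖B x‖) * ‖B x‖ ^ (2 ^ (k+1)) :=
                mul_le_mul_of_nonneg_right hstep (by positivity)
        have hcancel : ‖B (R x)‖ ^ (2 ^ (k+1)) * ‖B x‖ * ‖B x‖
            ≤ ‖B ((R ^ (2 ^ (k+1))) x)‖ * ‖B x‖ ^ (2 ^ (k+1)) * ‖B x‖ := by
          calc ‖B (R x)‖ ^ (2 ^ (k+1)) * ‖B x‖ * ‖B x‖
              = ‖B (R x)‖ ^ (2 ^ (k+1)) * ‖B x‖ ^ 2 := by ring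
            _ ≤ (‖B ((R ^ (2 ^ (k+1))) x)‖ * ‖B x‖) * ‖B x‖ ^ (2 ^ (k+1)) := this
            _ = ‖B ((R ^ (2 ^ (k+1))) x)‖ * ‖B x‖ ^ (2 ^ (k+1)) * ‖B x‖ := by ring
        exact le_of_mul_le_mul_right hcancel hb'
    -- conclude by contradiction
    by_contra hgt
    push_neg at hgt
    set r : ℝ := ‖B (R x)‖ / ((‖R‖ + 1) * ‖B x‖) with hr
    have hr1 : 1 < r := (one_lt_div (by positivity)).2 hgt
    have hK : ∀ k : ℕ, r ^ (2 ^ k) ≤ (‖B‖ * ‖x‖) / ‖B x‖ := by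
      intro k
      have h1 := (P k).trans (mul_le_mul_of_nonneg_right (abound (2 ^ k)) (by positivity))
      have h2 : ‖B (R x)‖ ^ (2 ^ k) * ‖B x‖
          ≤ (‖B‖ * ‖x‖) * ((‖R‖ + 1) * ‖B x‖) ^ (2 ^ k) := by
        calc ‖B (R x)‖ ^ (2 ^ k) * ‖B x‖
            ≤ ‖B‖ * ‖x‖ * (‖R‖ + 1) ^ (2 ^ k) * ‖B x‖ ^ (2 ^ k) := h1
          _ = (‖B‖ * ‖x‖) * ((‖R‖ + 1) * ‖B x‖) ^ (2 ^ k) := by rw [mul_pow]; ring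
      rw [hr, div_pow, div_le_div_iff₀ (by positivity) hb']
      calc ‖B (R x)‖ ^ (2 ^ k) * ‖B x‖
          ≤ (‖B‖ * ‖x‖) * ((‖R‖ + 1) * ‖B x‖) ^ (2 ^ k) := h2
        _ = ‖B‖ * ‖x‖ * ((‖R‖ + 1) * ‖B x‖) ^ 2 ^ k := by ring
    obtain ⟨n, hn⟩ := pow_unbounded_of_one_lt ((‖B‖ * ‖x‖) / ‖B x‖) hr1
    have : r ^ n ≤ r ^ (2 ^ n) := pow_le_pow_right₀ hr1.le Nat.lt_two_pow_self.le
    exact absurd ((this.trans (hK n))) (not_le.2 hn)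

lemma memBAhalf_of_exists {A T : H →L[ℂ] H} (hApos : A.IsPositive)
    (hW : ∃ W, A ∘L W = adjoint T ∘L A) : MemBAhalf A T := by
  obtain ⟨W, hW⟩ := hW
  obtain ⟨B, hB, hB2⟩ := exists_sqrt hApos
  have hA : IsSelfAdjoint A := hApos.isSelfAdjoint
  set R := W ∘L T with hR
  have hAT : A ∘L T = adjoint W ∘L A := by
    have := congrArg ContinuousLinearMap.adjoint hW
    rw [adjoint_comp, adjoint_comp, hA.adjoint_eq, adjoint_adjoint] at this
    exact this.symm
  have hAR : IsSelfAdjoint (A ∘L R) := by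
    rw [isSelfAdjoint_iff']
    have e : A ∘L R = (adjoint T ∘L A) ∘L T := by
      rw [hR, ← comp_assoc, hW]
    rw [e, adjoint_comp, adjoint_comp, adjoint_adjoint, hA.adjoint_eq, comp_assoc]
  refine ⟨‖R‖ + 1, by positivity, fun x => ?_⟩
  rw [aNorm_eq_sqrtApply hB hB2, aNorm_eq_sqrtApply hB hB2]
  have h1 : ‖B (T x)‖ ^ 2 ≤ ‖B x‖ * ((‖R‖ + 1) * ‖B x‖) := by
    calc ‖B (T x)‖ ^ 2 = (inner ℂ (A (T x)) (T x) : ℂ).re := sq_norm_eq hB hB2 _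
      _ = (inner ℂ (A x) (R x) : ℂ).re := by
          have e1 : A (T x) = adjoint W (A x) := by
            have := congrFun (congrArg DFunLike.coe hAT) x; simpa using this
          rw [e1, adjoint_inner_left]; rfl
      _ ≤ ‖(inner ℂ (A x) (R x) : ℂ)‖ := Complex.re_le_norm _
      _ = ‖(inner ℂ (B x) (B (R x)) : ℂ)‖ := by rw [innerA_eq hB hB2]
      _ ≤ ‖B x‖ * ‖B (R x)‖ := norm_inner_le_norm _ _
      _ ≤ ‖B x‖ * ((‖R‖ + 1) * ‖B x‖) :=
          mul_le_mul_of_nonneg_left (key_bound hB hB2 hAR x) (norm_nonneg _)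
  have h2 : ‖B (T x)‖ ^ 2 ≤ ((‖R‖ + 1) * ‖B x‖) ^ 2 := by
    have hM1 : (1:ℝ) ≤ ‖R‖ + 1 := by linarith [norm_nonneg R]
    calc ‖B (T x)‖ ^ 2 ≤ ‖B x‖ * ((‖R‖ + 1) * ‖B x‖) := h1
      _ ≤ ((‖R‖ + 1) * ‖B x‖) * ((‖R‖ + 1) * ‖B x‖) := by nlinarith [norm_nonneg (B x)]
      _ = ((‖R‖ + 1) * ‖B x‖) ^ 2 := (sq _).symm
  exact (pow_le_pow_iff_left₀ (norm_nonneg _) (by positivity) two_ne_zero).1 h2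

lemma exists_proj {A : H →L[ℂ] H} (hA : IsSelfAdjoint A) :
    ∃ P : H →L[ℂ] H, A ∘L P = A ∧ ∀ (Y : H →L[ℂ] H) (x : H),
      (P ∘L Y) x ∈ closure (Set.range A) := by
  set K : Submodule ℂ H := (LinearMap.range (A : H →ₗ[ℂ] H)).topologicalClosure with hK
  haveI : CompleteSpace K :=
    (Submodule.isClosed_topologicalClosure _).completeSpace_coe
  refine ⟨K.subtypeL ∘L (K.orthogonalProjectionOnto), ?_, ?_⟩
  · ext x
    have hmem : x - (K.orthogonalProjectionOnto x : H) ∈ Kᗮ :=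
      K.sub_starProjection_mem_orthogonal x
    have hzero : A (x - (K.orthogonalProjectionOnto x : H)) = 0 := by
      set v := x - (K.orthogonalProjectionOnto x : H)
      have hv : ∀ u ∈ K, (inner ℂ u v : ℂ) = 0 := fun u hu =>
        (Submodule.mem_orthogonal K v).1 hmem u hu
      have h1 : ∀ y : H, (inner ℂ (A y) v : ℂ) = 0 := fun y =>
        hv (A y) (Submodule.le_topologicalClosure _ ⟨y, rfl⟩)
      have h2 : (inner ℂ (A v) (A v) : ℂ) = 0 := by
        have := h1 (A v)
        calc (inner ℂ (A v) (A v) : ℂ) = inner ℂ ((adjoint A) (A v)) v := by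
              rw [adjoint_inner_left]
          _ = inner ℂ (A (A v)) v := by rw [hA.adjoint_eq]
          _ = 0 := h1 (A v)
      exact inner_self_eq_zero.1 h2
    have := map_sub A x (K.orthogonalProjectionOnto x : H)
    rw [hzero] at this
    have h3 : A x = A (K.orthogonalProjectionOnto x : H) := by
      have := sub_eq_zero.1 this.symm; exact this.symm ▸ rfl
    simpa [comp_apply] using h3.symm
  · intro Y x
    have : ((K.orthogonalProjectionOnto (Y x)) : H) ∈ K := (K.orthogonalProjectionOnto (Y x)).2
    have hKc : (K : Set H) = closure (Set.range A) := by
      rw [hK, Submodule.topologicalClosure_coe]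
      simp [LinearMap.coe_range]
    rw [← hKc]
    exact this

lemma flip_sharp {A U V : H →L[ℂ] H} (hA : IsSelfAdjoint A)
    (h : A ∘L U = adjoint V ∘L A) : A ∘L V = adjoint U ∘L A := by
  have := congrArg ContinuousLinearMap.adjoint h
  rw [adjoint_comp, adjoint_comp, hA.adjoint_eq, adjoint_adjoint] at this
  exact this.symm

lemma adj_add (U V : H →L[ℂ] H) : adjoint (U + V) = adjoint U + adjoint V := by
  rw [← star_eq_adjoint, ← star_eq_adjoint, ← star_eq_adjoint, star_add]

lemma adj_smul (a : ℂ) (U : H →L[ℂ] H) :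
    adjoint (a • U) = (starRingEnd ℂ a) • adjoint U := by
  rw [← star_eq_adjoint, ← star_eq_adjoint, star_smul]
  rfl

lemma happ {U V : H →L[ℂ] H} (h : U = V) (x : H) : U x = V x := by rw [h]

lemma norm_exp_I (φ : ℝ) : ‖Complex.exp ((φ:ℂ) * Complex.I)‖ = 1 := by
  rw [Complex.norm_exp]
  simp

lemma norm_exp_negI (φ : ℝ) : ‖Complex.exp (-((φ:ℂ) * Complex.I))‖ = 1 := by
  rw [Complex.norm_exp]
  simp

lemma norm_two_inv : ‖(2:ℂ)⁻¹‖ = 2⁻¹ := by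
  rw [norm_inv]
  norm_num

lemma wNA_bdd (N : Seminorm ℂ (H →L[ℂ] H)) (S Ss : H →L[ℂ] H) :
    BddAbove (Set.range fun θ : ℝ => N (ReA (Complex.exp ((θ : ℂ) * Complex.I) • S)
      (Complex.exp (-((θ : ℂ) * Complex.I)) • Ss))) := by
  refine ⟨N S + N Ss, ?_⟩
  rintro _ ⟨φ, rfl⟩
  calc N (ReA (Complex.exp ((φ:ℂ) * Complex.I) • S) (Complex.exp (-((φ:ℂ) * Complex.I)) • Ss))
      ≤ ‖(2:ℂ)⁻¹‖ * (N (Complex.exp ((φ:ℂ) * Complex.I) • S)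
          + N (Complex.exp (-((φ:ℂ) * Complex.I)) • Ss)) := by
        rw [ReA, map_smul_eq_mul]
        exact mul_le_mul_of_nonneg_left (map_add_le_add N _ _) (norm_nonneg _)
    _ = ‖(2:ℂ)⁻¹‖ * (N S + N Ss) := by
        rw [map_smul_eq_mul, map_smul_eq_mul, norm_exp_I, norm_exp_negI, one_mul, one_mul]
    _ ≤ 1 * (N S + N Ss) := by
        refine mul_le_mul_of_nonneg_right ?_ (by positivity)
        rw [norm_two_inv]
        norm_num
    _ = N S + N Ss := one_mul _

lemma exp_pi_div_two_I : Complex.exp ((Real.pi : ℂ) / 2 * Complex.I) = Complex.I := by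
  rw [Complex.exp_mul_I,
    show ((Real.pi:ℂ)/2) = ((Real.pi/2 : ℝ) : ℂ) by push_cast; ring,
    ← Complex.ofReal_cos, ← Complex.ofReal_sin, Real.cos_pi_div_two, Real.sin_pi_div_two]
  simp

set_option maxHeartbeats 1000000 in
lemma main_core (A : H →L[ℂ] H) (hApos : A.IsPositive)
    (N : Seminorm ℂ (H →L[ℂ] H)) (h1 : SelfadjInv A N) (h2 : Submult A N)
    (T Ts S Ss W : H →L[ℂ] H) (hTs : IsSharp A T Ts) (hSs : IsSharp A S Ss)
    (ε : ℂ) (hε : ε = 1 ∨ ε = -1)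
    (hW : IsSharp A (T ∘L S + ε • (S ∘L Ts)) W) :
    wNA N (T ∘L S + ε • (S ∘L Ts)) W ≤ 2 * N T * wNA N S Ss := by
  have hA : IsSelfAdjoint A := hApos.isSelfAdjoint
  set X := T ∘L S + ε • (S ∘L Ts) with hXdef
  obtain ⟨P, hP1, hP2⟩ := exists_proj hA
  have hεconj : starRingEnd ℂ ε = ε := by rcases hε with rfl | rfl <;> simp
  have hεnorm : ‖ε‖ = 1 := by rcases hε with rfl | rfl <;> simp
  have hε2 : ε * ε = 1 := by rcases hε with rfl | rfl <;> norm_num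
  have hAT : A ∘L T = adjoint Ts ∘L A := flip_sharp hA hTs.1
  have hAS : A ∘L S = adjoint Ss ∘L A := flip_sharp hA hSs.1
  have hAX : A ∘L X = adjoint W ∘L A := flip_sharp hA hW.1
  have fAT : ∀ u, A (T u) = adjoint Ts (A u) := fun u => happ hAT u
  have fAS : ∀ u, A (S u) = adjoint Ss (A u) := fun u => happ hAS u
  have fATs : ∀ u, A (Ts u) = adjoint T (A u) := fun u => happ hTs.1 u
  have fASs : ∀ u, A (Ss u) = adjoint S (A u) := fun u => happ hSs.1 u
  have hadjX : adjoint X = adjoint S ∘L adjoint T + ε • (adjoint Ts ∘L adjoint S) := by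
    rw [hXdef, adj_add, adj_smul, hεconj, adjoint_comp, adjoint_comp]
  have fAW : ∀ u, A (W u) =
      adjoint S (adjoint T (A u)) + ε • adjoint Ts (adjoint S (A u)) := fun u => by
    have h := happ hW.1 u
    rw [comp_apply, comp_apply] at h
    rw [h, happ hadjX (A u)]
    simp
  have hT2 : MemBAhalf A T := memBAhalf_of_exists hApos ⟨Ts, hTs.1⟩
  have hTs2 : MemBAhalf A Ts := memBAhalf_of_exists hApos ⟨T, hAT⟩
  have hNTs : N T = N Ts := h1 T Ts hTs
  have bddS := wNA_bdd N S Ss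
  simp only [wNA]
  refine ciSup_le fun θ => ?_
  set c : ℂ := Complex.exp ((θ:ℂ) * Complex.I) with hc
  set c' : ℂ := Complex.exp (-((θ:ℂ) * Complex.I)) with hc'
  have hcconj : starRingEnd ℂ c = c' := by
    rw [hc, hc', ← Complex.exp_conj]
    congr 1
    simp [Complex.conj_ofReal]
  have hc'conj : starRingEnd ℂ c' = c := by
    rw [← hcconj, Complex.conj_conj]
  have hcnorm : ‖c‖ = 1 := norm_exp_I θ
  have hc'norm : ‖c'‖ = 1 := norm_exp_negI θ
  set D : H →L[ℂ] H := c • S + (ε * c') • Ss with hD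
  set Y : H →L[ℂ] H := c • X + c' • W with hY
  set Z : H →L[ℂ] H := T ∘L D + ε • (D ∘L Ts) with hZ
  have fD : ∀ u, D u = c • S u + (ε * c') • Ss u := fun u => by rw [hD]; simp
  -- E1 : A ∘L Z = A ∘L Y
  have E1 : A ∘L Z = A ∘L Y := by
    ext x
    simp only [hZ, hY, hXdef, comp_apply, add_apply, smul_apply, map_add, map_smul,
      fD, fAT, fAS, fATs, fASs, fAW, smul_add, smul_smul]
    rcases hε with h | h <;> rw [h] <;> module
  -- E2 : adjoint Y ∘L A = A ∘L Y
  have fXadjA : ∀ u, adjoint X (A u) = A (W u) := fun u => (happ hW.1 u).symm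
  have fWadjA : ∀ u, adjoint W (A u) = A (X u) := fun u => (happ hAX u).symm
  have hadjY : adjoint Y = c' • adjoint X + c • adjoint W := by
    rw [hY, adj_add, adj_smul, adj_smul, hcconj, hc'conj]
  have E2 : adjoint Y ∘L A = A ∘L Y := by
    ext x
    rw [hadjY]
    simp only [comp_apply, hadjY, hY, add_apply, smul_apply, map_add, map_smul,
      fXadjA, fWadjA]
    module
  set Zs : H →L[ℂ] H := P ∘L Y with hZs
  have hAZs : A ∘L Zs = A ∘L Y := by rw [hZs, ← comp_assoc, hP1]
  have sharpY : IsSharp A Y Zs := by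
    refine ⟨?_, fun x => hP2 Y x⟩
    rw [hAZs, ← E2]
  have sharpZ : IsSharp A Z Zs := by
    refine ⟨?_, fun x => hP2 Y x⟩
    have hZA : adjoint Z ∘L A = adjoint Y ∘L A := by
      have h := congrArg ContinuousLinearMap.adjoint E1
      rw [adjoint_comp, adjoint_comp, hA.adjoint_eq] at h
      exact h
    rw [hAZs, hZA, E2]
  have hNYZ : N Y = N Z := by
    rw [h1 Y Zs sharpY, h1 Z Zs sharpZ]
  -- MemBAhalf for D
  have hadjD : adjoint D = c' • adjoint S + (ε * c) • adjoint Ss := by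
    rw [hD, adj_add, adj_smul, adj_smul, hcconj, map_mul, hεconj, hc'conj]
  have hD2 : MemBAhalf A D := by
    refine memBAhalf_of_exists hApos ⟨(ε * c) • S + c' • Ss, ?_⟩
    ext x
    simp only [comp_apply, hadjD, add_apply, smul_apply, map_add, map_smul, fAS, fASs]
    module
  -- bound N D ≤ 2 * wNA N S Ss
  have hND : N D ≤ 2 * wNA N S Ss := by
    rcases hε with h | h
    · have e : ReA (c • S) (c' • Ss) = (2:ℂ)⁻¹ • D := by
        rw [ReA, hD, h]
        module
      have hle : N (ReA (c • S) (c' • Ss)) ≤ wNA N S Ss := by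
        simp only [wNA]
        exact le_ciSup bddS θ
      rw [e, map_smul_eq_mul, norm_two_inv] at hle
      have h0 : (0:ℝ) ≤ N D := apply_nonneg N D
      linarith
    · set φ : ℝ := θ + Real.pi / 2 with hφ
      have hsplit : ((φ:ℂ) * Complex.I) = (θ:ℂ) * Complex.I + (Real.pi:ℂ)/2 * Complex.I := by
        rw [hφ]
        push_cast
        ring
      have hexpφ : Complex.exp ((φ:ℂ) * Complex.I) = c * Complex.I := by
        rw [hsplit, Complex.exp_add, exp_pi_div_two_I, hc]
      have hexpφ' : Complex.exp (-((φ:ℂ) * Complex.I)) = c' * Complex.I⁻¹ := by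
        rw [hsplit, neg_add, Complex.exp_add, Complex.exp_neg, Complex.exp_neg,
          exp_pi_div_two_I, hc', Complex.exp_neg]
      have e : ReA (Complex.exp ((φ:ℂ) * Complex.I) • S)
          (Complex.exp (-((φ:ℂ) * Complex.I)) • Ss) = ((2:ℂ)⁻¹ * Complex.I) • D := by
        rw [ReA, hexpφ, hexpφ', hD, Complex.inv_I, h]
        module
      have hle : N (ReA (Complex.exp ((φ:ℂ) * Complex.I) • S)
          (Complex.exp (-((φ:ℂ) * Complex.I)) • Ss)) ≤ wNA N S Ss := by
        simp only [wNA]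
        exact le_ciSup bddS φ
      rw [e, map_smul_eq_mul] at hle
      have hn : ‖(2:ℂ)⁻¹ * Complex.I‖ = 2⁻¹ := by
        rw [norm_mul, norm_two_inv, Complex.norm_I, mul_one]
      rw [hn] at hle
      have h0 : (0:ℝ) ≤ N D := apply_nonneg N D
      linarith
  -- final chain
  have eRe : ReA (c • X) (c' • W) = (2:ℂ)⁻¹ • Y := by rw [ReA, hY]
  have hNZ : N Z ≤ 2 * (N T * N D) := by
    calc N Z ≤ N (T ∘L D) + N (ε • (D ∘L Ts)) := map_add_le_add N _ _
      _ = N (T ∘L D) + N (D ∘L Ts) := by rw [map_smul_eq_mul, hεnorm, one_mul]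
      _ ≤ N T * N D + N D * N Ts := add_le_add (h2 T D hT2 hD2) (h2 D Ts hD2 hTs2)
      _ = 2 * (N T * N D) := by rw [← hNTs]; ring
  calc N (ReA (c • X) (c' • W)) = ‖(2:ℂ)⁻¹‖ * N Y := by rw [eRe, map_smul_eq_mul]
    _ = 2⁻¹ * N Z := by rw [norm_two_inv, hNYZ]
    _ ≤ 2⁻¹ * (2 * (N T * N D)) := by
        refine mul_le_mul_of_nonneg_left hNZ (by norm_num)
    _ = N T * N D := by ring
    _ ≤ N T * (2 * wNA N S Ss) :=
        mul_le_mul_of_nonneg_left hND (apply_nonneg N T)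
    _ = 2 * N T * wNA N S Ss := by ring


theorem stmt15 (A : H →L[ℂ] H) (hA : A ≠ 0) (hApos : A.IsPositive)
    (N : Seminorm ℂ (H →L[ℂ] H)) (h1 : SelfadjInv A N) (h2 : Submult A N)
    (T Ts S Ss W1 W2 : H →L[ℂ] H) (hTs : IsSharp A T Ts) (hSs : IsSharp A S Ss)
    (hW1 : IsSharp A (T ∘L S - S ∘L Ts) W1)
    (hW2 : IsSharp A (T ∘L S + S ∘L Ts) W2) :
    wNA N (T ∘L S + S ∘L Ts) W2 ≤ 2 * N T * wNA N S Ss ∧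
      wNA N (T ∘L S - S ∘L Ts) W1 ≤ 2 * N T * wNA N S Ss := by
  have e1 : T ∘L S + (1:ℂ) • (S ∘L Ts) = T ∘L S + S ∘L Ts := by rw [one_smul]
  have e2 : T ∘L S + (-1:ℂ) • (S ∘L Ts) = T ∘L S - S ∘L Ts := by
    rw [neg_one_smul]
    exact (sub_eq_add_neg _ _).symm
  constructor
  · have h := main_core A hApos N h1 h2 T Ts S Ss W2 hTs hSs 1 (Or.inl rfl)
      (by rw [e1]; exact hW2)
    rwa [e1] at h
  · have h := main_core A hApos N h1 h2 T Ts S Ss W1 hTs hSs (-1) (Or.inr rfl)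
      (by rw [e2]; exact hW1)
    rwa [e2] at h
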